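/- Let S ∈ ℝ^{m×d} be an OSNAP matrix with sparsity s ≥ 1 whose sign variables σ_{i,j} are 4-wise independent Rademacher, independent of the nonzero positions δ_{i,j}, which satisfy E[∏_{(i,j)∈T} δ_{i,j}] ≤ (s/m)^{|T|} for all sets T and ∑ᵢ δ_{i,j} = s. Then for every unit vector x ∈ ℝ^d, E[(‖Sx‖² − 1)²] ≤ 2/m. -/

import Mathlib

open MeasureTheory ProbabilityTheory

theorem aux_integral_prod {ι Ω : Type*} [MeasurableSpace Ω] {μ : Measure Ω}
    [IsProbabilityMeasure μ] (f : ι → Ω → ℝ) (hmeas : ∀ i, Measurable (f i))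
    (hind : iIndepFun f μ) (t : Finset ι) :
    ∫ ω, ∏ i ∈ t, f i ω ∂μ = ∏ i ∈ t, ∫ ω, f i ω ∂μ := by
  classical
  induction t using Finset.induction_on with
  | empty => simp
  | @insert a t ha ih =>
    have hfe : (∏ j ∈ t, f j) = fun ω => ∏ i ∈ t, f i ω := by
      funext ω; exact Finset.prod_apply ω t f
    have hprod : Measurable (∏ j ∈ t, f j) := by
      rw [hfe]; exact Finset.measurable_prod _ (fun i _ => hmeas i)
    have key := (hind.indepFun_finsetProd_of_notMem hmeas ha).integral_mul_eq_mul_integral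
      hprod.aestronglyMeasurable (hmeas a).aestronglyMeasurable
    calc ∫ ω, ∏ i ∈ insert a t, f i ω ∂μ
        = ∫ ω, ((∏ j ∈ t, f j) * f a) ω ∂μ := by
          congr 1; funext ω
          simp [hfe, Finset.prod_insert ha, mul_comm]
      _ = (∫ ω, (∏ j ∈ t, f j) ω ∂μ) * ∫ ω, f a ω ∂μ := key
      _ = ∏ i ∈ insert a t, ∫ ω, f i ω ∂μ := by
          rw [Finset.prod_insert ha, ← ih, hfe, mul_comm]

/-- For an OSNAP matrix with sparsity `s ≥ 1`, 4-wise independent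
uniform signs independent of the positions, and positions satisfying
`E[∏_{(i,j)∈T} δ_{i,j}] ≤ (s/m)^{|T|}` and `∑ᵢ δ_{i,j} = s`, every unit vector
`x` satisfies `E[(‖Sx‖² - 1)²] ≤ 2/m`. -/
theorem osnap_second_moment_bound
    {Ω : Type*} [MeasurableSpace Ω] (μ : Measure Ω) [IsProbabilityMeasure μ]
    (m d s : ℕ) (hm : 0 < m) (hs : 0 < s)
    (δ : Fin m → Fin d → Ω → ℝ) (hδmeas : ∀ i j, Measurable (δ i j))
    (hδ01 : ∀ i j ω, δ i j ω = 0 ∨ δ i j ω = 1)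
    (hcol : ∀ j ω, ∑ i, δ i j ω = (s : ℝ))
    (hδprod : ∀ T : Finset (Fin m × Fin d),
      (∫ ω, ∏ p ∈ T, δ p.1 p.2 ω ∂μ) ≤ ((s : ℝ) / m) ^ T.card)
    (σ : Fin m → Fin d → Ω → ℝ) (hσmeas : ∀ i j, Measurable (σ i j))
    (hσval : ∀ i j ω, σ i j ω = 1 ∨ σ i j ω = -1)
    (hσunif : ∀ i j, μ {ω | σ i j ω = 1} = 1 / 2)
    (hσ4wise : ∀ T : Finset (Fin m × Fin d), T.card ≤ 4 →
      iIndepFun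
        (fun p : {p // p ∈ T} => fun ω => σ (p : Fin m × Fin d).1 (p : Fin m × Fin d).2 ω) μ)
    (hσδ : IndepFun (fun ω (p : Fin m × Fin d) => σ p.1 p.2 ω)
      (fun ω (p : Fin m × Fin d) => δ p.1 p.2 ω) μ) :
    ∀ x : Fin d → ℝ, (∑ j, x j ^ 2) = 1 →
      (∫ ω, ((∑ i, (∑ j, δ i j ω * σ i j ω / Real.sqrt s * x j) ^ 2) - 1) ^ 2 ∂μ)
        ≤ 2 / (m : ℝ) := by
  classical
  intro x hx
  have hsR : (0:ℝ) < s := by exact_mod_cast hs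
  have hmR : (0:ℝ) < m := by exact_mod_cast hm
  have hss : Real.sqrt s * Real.sqrt s = (s:ℝ) := Real.mul_self_sqrt hsR.le
  have hσ2 : ∀ i j ω, σ i j ω * σ i j ω = 1 := by
    intro i j ω; rcases hσval i j ω with h | h <;> rw [h] <;> norm_num
  have hδ2 : ∀ i j ω, δ i j ω * δ i j ω = δ i j ω := by
    intro i j ω; rcases hδ01 i j ω with h | h <;> rw [h] <;> norm_num
  have hδa : ∀ i j ω, |δ i j ω| ≤ 1 := by
    intro i j ω; rcases hδ01 i j ω with h | h <;> rw [h] <;> norm_num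
  have hσa : ∀ i j ω, |σ i j ω| = 1 := by
    intro i j ω; rcases hσval i j ω with h | h <;> rw [h] <;> norm_num
  have hσint : ∀ i j, ∫ ω, σ i j ω ∂μ = 0 := by
    intro i j
    have hA : MeasurableSet {ω | σ i j ω = 1} := hσmeas i j (measurableSet_singleton 1)
    have heq : (fun ω => σ i j ω) =
        fun ω => Set.indicator {ω | σ i j ω = 1} (fun _ => (2:ℝ)) ω - 1 := by
      funext ω
      by_cases h : σ i j ω = 1
      · have hmem : ω ∈ {ω | σ i j ω = 1} := h
        rw [Set.indicator_of_mem hmem, h]; norm_num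
      · rcases hσval i j ω with h1 | h1
        · exact absurd h1 h
        · have hmem : ω ∉ {ω | σ i j ω = 1} := h
          rw [Set.indicator_of_notMem hmem, h1]; norm_num
    rw [heq, integral_sub ((integrable_const (2:ℝ)).indicator hA) (integrable_const 1)]
    rw [integral_indicator_const _ hA, integral_const]
    rw [measureReal_def, hσunif i j]
    norm_num [ENNReal.toReal_div]
  have hσprod0 : ∀ T : Finset (Fin m × Fin d), T.card ≤ 4 → T.Nonempty →
      ∫ ω, ∏ p ∈ T, σ p.1 p.2 ω ∂μ = 0 := by
    intro T hc hne
    have h := aux_integral_prod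
      (fun p : {p // p ∈ T} => fun ω => σ (p : Fin m × Fin d).1 (p : Fin m × Fin d).2 ω)
      (fun q => hσmeas _ _) (hσ4wise T hc) Finset.univ
    have h1 : ∀ ω, ∏ q : {p // p ∈ T}, σ (q : Fin m × Fin d).1 (q : Fin m × Fin d).2 ω
        = ∏ p ∈ T, σ p.1 p.2 ω := by
      intro ω
      rw [Finset.univ_eq_attach]
      exact Finset.prod_attach T (fun p => σ p.1 p.2 ω)
    obtain ⟨p0, hp0⟩ := hne
    have h2 : (∏ q : {p // p ∈ T}, ∫ ω, σ (q : Fin m × Fin d).1 (q : Fin m × Fin d).2 ω ∂μ) = 0 :=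
      Finset.prod_eq_zero (Finset.mem_univ (⟨p0, hp0⟩ : {p // p ∈ T})) (hσint _ _)
    calc ∫ ω, ∏ p ∈ T, σ p.1 p.2 ω ∂μ
        = ∫ ω, ∏ q : {p // p ∈ T}, σ (q : Fin m × Fin d).1 (q : Fin m × Fin d).2 ω ∂μ := by
          congr 1; funext ω; rw [h1]
      _ = 0 := by rw [h]; exact h2
  have hσ2zero : ∀ p q : Fin m × Fin d, p ≠ q →
      ∫ ω, σ p.1 p.2 ω * σ q.1 q.2 ω ∂μ = 0 := by
    intro p q hpq
    have hcard : ({p, q} : Finset (Fin m × Fin d)).card ≤ 4 := by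
      rw [Finset.card_pair hpq]; norm_num
    have h := hσprod0 {p, q} hcard ⟨p, by simp⟩
    calc ∫ ω, σ p.1 p.2 ω * σ q.1 q.2 ω ∂μ
        = ∫ ω, ∏ r ∈ ({p, q} : Finset (Fin m × Fin d)), σ r.1 r.2 ω ∂μ := by
          congr 1; funext ω; rw [Finset.prod_pair hpq]
      _ = 0 := h
  have hσ4zero : ∀ p q r t : Fin m × Fin d, p ≠ q → p ≠ r → p ≠ t → q ≠ r → q ≠ t → r ≠ t →
      ∫ ω, σ p.1 p.2 ω * σ q.1 q.2 ω * (σ r.1 r.2 ω * σ t.1 t.2 ω) ∂μ = 0 := by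
    intro p q r t hpq hpr hpt hqr hqt hrt
    have hcard : ({p, q, r, t} : Finset (Fin m × Fin d)).card ≤ 4 := by
      refine le_trans (Finset.card_insert_le _ _) (Nat.succ_le_succ ?_)
      refine le_trans (Finset.card_insert_le _ _) (Nat.succ_le_succ ?_)
      refine le_trans (Finset.card_insert_le _ _) (Nat.succ_le_succ ?_)
      simp
    have h := hσprod0 {p, q, r, t} hcard ⟨p, by simp⟩
    calc ∫ ω, σ p.1 p.2 ω * σ q.1 q.2 ω * (σ r.1 r.2 ω * σ t.1 t.2 ω) ∂μ
        = ∫ ω, ∏ a ∈ ({p, q, r, t} : Finset (Fin m × Fin d)), σ a.1 a.2 ω ∂μ := by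
          congr 1; funext ω
          rw [Finset.prod_insert (by simp [hpq, hpr, hpt]),
            Finset.prod_insert (by simp [hqr, hqt]), Finset.prod_pair hrt]
          ring
      _ = 0 := h
  have hsplit : ∀ p1 p2 p3 p4 q1 q2 q3 q4 : Fin m × Fin d,
      ∫ ω, (σ p1.1 p1.2 ω * σ p2.1 p2.2 ω * (σ p3.1 p3.2 ω * σ p4.1 p4.2 ω)) *
           (δ q1.1 q1.2 ω * δ q2.1 q2.2 ω * (δ q3.1 q3.2 ω * δ q4.1 q4.2 ω)) ∂μ
      = (∫ ω, σ p1.1 p1.2 ω * σ p2.1 p2.2 ω * (σ p3.1 p3.2 ω * σ p4.1 p4.2 ω) ∂μ) *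
        (∫ ω, δ q1.1 q1.2 ω * δ q2.1 q2.2 ω * (δ q3.1 q3.2 ω * δ q4.1 q4.2 ω) ∂μ) := by
    intro p1 p2 p3 p4 q1 q2 q3 q4
    set F : (Fin m × Fin d → ℝ) → ℝ := fun v => v p1 * v p2 * (v p3 * v p4) with hF
    set G : (Fin m × Fin d → ℝ) → ℝ := fun v => v q1 * v q2 * (v q3 * v q4) with hG
    have hFm : Measurable F :=
      ((measurable_pi_apply p1).mul (measurable_pi_apply p2)).mul
        ((measurable_pi_apply p3).mul (measurable_pi_apply p4))
    have hGm : Measurable G :=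
      ((measurable_pi_apply q1).mul (measurable_pi_apply q2)).mul
        ((measurable_pi_apply q3).mul (measurable_pi_apply q4))
    have hSm : Measurable (fun ω (p : Fin m × Fin d) => σ p.1 p.2 ω) :=
      measurable_pi_lambda _ (fun p => hσmeas p.1 p.2)
    have hDm : Measurable (fun ω (p : Fin m × Fin d) => δ p.1 p.2 ω) :=
      measurable_pi_lambda _ (fun p => hδmeas p.1 p.2)
    have h := (hσδ.comp hFm hGm).integral_mul_eq_mul_integral
      (hFm.comp hSm).aestronglyMeasurable (hGm.comp hDm).aestronglyMeasurable
    exact h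
  have hδpair : ∀ (i : Fin m) (j j' : Fin d), j ≠ j' →
      ∫ ω, δ i j ω * δ i j' ω ∂μ ≤ ((s:ℝ)/m)^2 := by
    intro i j j' hjj
    have hne : (i, j) ≠ (i, j') := by simp [hjj]
    have h := hδprod {(i, j), (i, j')}
    rw [Finset.card_pair hne] at h
    calc ∫ ω, δ i j ω * δ i j' ω ∂μ
        = ∫ ω, ∏ p ∈ ({(i,j), (i,j')} : Finset (Fin m × Fin d)), δ p.1 p.2 ω ∂μ := by
          congr 1; funext ω; rw [Finset.prod_pair hne]
      _ ≤ ((s:ℝ)/m)^2 := h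
  set u : Fin m → Fin d → Fin d → Ω → ℝ :=
    fun i j j' ω => if j = j' then 0
      else δ i j ω * δ i j' ω * (σ i j ω * σ i j' ω) * (x j * x j') with hu
  have humeas : ∀ i j j', Measurable (u i j j') := by
    intro i j j'
    rw [hu]
    by_cases h : j = j'
    · simp only [if_pos h]; exact measurable_const
    · simp only [if_neg h]
      exact (((hδmeas i j).mul (hδmeas i j')).mul
        ((hσmeas i j).mul (hσmeas i j'))).mul measurable_const
  have hubd : ∀ i j j' ω, |u i j j' ω| ≤ |x j * x j'| := by
    intro i j j' ω
    rw [hu]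
    by_cases h : j = j'
    · simp only [if_pos h, abs_zero]; exact abs_nonneg _
    · simp only [if_neg h]
      simp only [abs_mul]
      rw [hσa, hσa]
      have h1 : |δ i j ω| * |δ i j' ω| ≤ 1 :=
        mul_le_one₀ (hδa i j ω) (abs_nonneg _) (hδa i j' ω)
      have h2 : (0:ℝ) ≤ |x j| * |x j'| := mul_nonneg (abs_nonneg _) (abs_nonneg _)
      nlinarith [abs_nonneg (δ i j ω), abs_nonneg (δ i j' ω)]
  have huint : ∀ (i i' : Fin m) (j j' k k' : Fin d),
      Integrable (fun ω => u i j j' ω * u i' k k' ω) μ := by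
    intro i i' j j' k k'
    refine Integrable.mono' (integrable_const (|x j * x j'| * |x k * x k'|))
      ((humeas i j j').mul (humeas i' k k')).aestronglyMeasurable (ae_of_all _ fun ω => ?_)
    rw [Real.norm_eq_abs, abs_mul]
    exact mul_le_mul (hubd i j j' ω) (hubd i' k k' ω) (abs_nonneg _) (abs_nonneg _)
  -- pointwise identity
  have hpt : ∀ ω, (∑ i, (∑ j, δ i j ω * σ i j ω / Real.sqrt s * x j) ^ 2) - 1
      = (1/(s:ℝ)) * ∑ i, ∑ j, ∑ j', u i j j' ω := by
    intro ω
    have hexp : ∀ i : Fin m, (∑ j, δ i j ω * σ i j ω / Real.sqrt s * x j) ^ 2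
        = ∑ j, ∑ j', ((if j = j' then δ i j ω * x j ^ 2 / s else 0) + u i j j' ω / s) := by
      intro i
      rw [sq, Finset.sum_mul_sum]
      refine Finset.sum_congr rfl fun j _ => Finset.sum_congr rfl fun j' _ => ?_
      by_cases h : j = j'
      · subst h
        rw [hu]
        simp only [if_pos rfl]
        have h1 : δ i j ω * σ i j ω / Real.sqrt s * x j * (δ i j ω * σ i j ω / Real.sqrt s * x j)
            = (δ i j ω * δ i j ω) * (σ i j ω * σ i j ω) * (x j ^ 2) / (Real.sqrt s * Real.sqrt s) := by
          ring
        rw [h1, hδ2, hσ2, hss]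
        simp [hu]
      · rw [hu]
        simp only [if_neg h]
        have h1 : δ i j ω * σ i j ω / Real.sqrt s * x j * (δ i j' ω * σ i j' ω / Real.sqrt s * x j')
            = δ i j ω * δ i j' ω * (σ i j ω * σ i j' ω) * (x j * x j') / (Real.sqrt s * Real.sqrt s) := by
          ring
        rw [h1, hss]
        ring
    rw [Finset.sum_congr rfl fun i _ => hexp i]
    have hsplit2 : ∀ i : Fin m, ∑ j, ∑ j', ((if j = j' then δ i j ω * x j ^ 2 / s else 0) + u i j j' ω / s)
        = (∑ j, δ i j ω * x j ^ 2 / s) + (∑ j, ∑ j', u i j j' ω) / s := by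
      intro i
      rw [Finset.sum_div]
      rw [← Finset.sum_add_distrib]
      refine Finset.sum_congr rfl fun j _ => ?_
      rw [Finset.sum_add_distrib, Finset.sum_ite_eq Finset.univ j fun _ => δ i j ω * x j ^ 2 / s,
        Finset.sum_div]
      simp
    rw [Finset.sum_congr rfl fun i _ => hsplit2 i, Finset.sum_add_distrib]
    have hdiag : ∑ i, ∑ j, δ i j ω * x j ^ 2 / s = 1 := by
      rw [Finset.sum_comm]
      have : ∀ j : Fin d, ∑ i, δ i j ω * x j ^ 2 / s = x j ^ 2 := by
        intro j
        rw [show (fun i => δ i j ω * x j ^ 2 / s) = fun i => δ i j ω * (x j ^ 2 / s) from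
          funext fun i => by ring]
        rw [← Finset.sum_mul, hcol j ω]
        field_simp
      rw [Finset.sum_congr rfl fun j _ => this j, hx]
    rw [hdiag, ← Finset.sum_div]
    ring
  set C : Fin d → Fin d → ℝ := fun j j' => ((s:ℝ)/m)^2 * (x j^2 * x j'^2) with hC
  have hCnn : ∀ j j', 0 ≤ C j j' := by intro j j'; rw [hC]; positivity
  have hterm : ∀ (i i' : Fin m) (j j' k k' : Fin d),
      ∫ ω, u i j j' ω * u i' k k' ω ∂μ ≤
      (if (i', k, k') = (i, j, j') then C j j' else 0) +
      (if (i', k, k') = (i, j', j) then C j j' else 0) := by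
    intro i i' j j' k k'
    have hRHSnn : (0:ℝ) ≤ (if (i', k, k') = (i, j, j') then C j j' else 0) +
        (if (i', k, k') = (i, j', j) then C j j' else 0) := by
      have t1 : (0:ℝ) ≤ (if (i', k, k') = (i, j, j') then C j j' else 0) := by
        split_ifs; exacts [hCnn j j', le_rfl]
      have t2 : (0:ℝ) ≤ (if (i', k, k') = (i, j', j) then C j j' else 0) := by
        split_ifs; exacts [hCnn j j', le_rfl]
      linarith
    by_cases hjj : j = j'
    · have : ∀ ω, u i j j' ω * u i' k k' ω = 0 := by
        intro ω; rw [hu]; simp [hjj]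
      rw [show (fun ω => u i j j' ω * u i' k k' ω) = fun _ => (0:ℝ) from funext this]
      rw [integral_const]; simpa using hRHSnn
    by_cases hkk : k = k'
    · have : ∀ ω, u i j j' ω * u i' k k' ω = 0 := by
        intro ω; rw [hu]; simp [hkk]
      rw [show (fun ω => u i j j' ω * u i' k k' ω) = fun _ => (0:ℝ) from funext this]
      rw [integral_const]; simpa using hRHSnn
    -- both off-diagonal
    have hue : ∀ ω, u i j j' ω * u i' k k' ω =
        δ i j ω * δ i j' ω * (σ i j ω * σ i j' ω) * (x j * x j') *
        (δ i' k ω * δ i' k' ω * (σ i' k ω * σ i' k' ω) * (x k * x k')) := by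
      intro ω; rw [hu]; simp [hjj, hkk]
    by_cases hm1 : i' = i ∧ k = j ∧ k' = j'
    · obtain ⟨hA, hB, hD⟩ := hm1
      obtain rfl := hA.symm; obtain rfl := hB.symm; obtain rfl := hD.symm
      -- matched case 1
      have hpt : ∀ ω, u i j j' ω * u i j j' ω =
          (x j ^ 2 * x j' ^ 2) * (δ i j ω * δ i j' ω) := by
        intro ω
        rw [hue ω]
        have e : δ i j ω * δ i j' ω * (σ i j ω * σ i j' ω) * (x j * x j') *
            (δ i j ω * δ i j' ω * (σ i j ω * σ i j' ω) * (x j * x j'))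
            = ((δ i j ω * δ i j ω) * (δ i j' ω * δ i j' ω)) *
              ((σ i j ω * σ i j ω) * (σ i j' ω * σ i j' ω)) * (x j ^ 2 * x j' ^ 2) := by
          ring
        rw [e, hδ2, hδ2, hσ2, hσ2]
        ring
      rw [show (fun ω => u i j j' ω * u i j j' ω) =
        fun ω => (x j ^ 2 * x j' ^ 2) * (δ i j ω * δ i j' ω) from funext hpt]
      rw [MeasureTheory.integral_const_mul]
      have hb := hδpair i j j' hjj
      have hxnn : (0:ℝ) ≤ x j ^ 2 * x j' ^ 2 := by positivity
      have hle : x j ^ 2 * x j' ^ 2 * ∫ ω, δ i j ω * δ i j' ω ∂μ ≤ C j j' := by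
        rw [hC]
        calc x j ^ 2 * x j' ^ 2 * ∫ ω, δ i j ω * δ i j' ω ∂μ
            ≤ x j ^ 2 * x j' ^ 2 * (((s:ℝ)/m)^2) := mul_le_mul_of_nonneg_left hb hxnn
          _ = ((s:ℝ)/m)^2 * (x j^2 * x j'^2) := by ring
      rw [if_pos rfl, if_neg (by simp [hjj, Ne.symm hjj])]
      linarith
    by_cases hm2 : i' = i ∧ k = j' ∧ k' = j
    · obtain ⟨hA, hB, hD⟩ := hm2
      obtain rfl := hA.symm; obtain rfl := hB.symm; obtain rfl := hD.symm
      have hpt : ∀ ω, u i j j' ω * u i j' j ω =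
          (x j ^ 2 * x j' ^ 2) * (δ i j ω * δ i j' ω) := by
        intro ω
        rw [hue ω]
        have e : δ i j ω * δ i j' ω * (σ i j ω * σ i j' ω) * (x j * x j') *
            (δ i j' ω * δ i j ω * (σ i j' ω * σ i j ω) * (x j' * x j))
            = ((δ i j ω * δ i j ω) * (δ i j' ω * δ i j' ω)) *
              ((σ i j ω * σ i j ω) * (σ i j' ω * σ i j' ω)) * (x j ^ 2 * x j' ^ 2) := by
          ring
        rw [e, hδ2, hδ2, hσ2, hσ2]
        ring
      rw [show (fun ω => u i j j' ω * u i j' j ω) =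
        fun ω => (x j ^ 2 * x j' ^ 2) * (δ i j ω * δ i j' ω) from funext hpt]
      rw [MeasureTheory.integral_const_mul]
      have hb := hδpair i j j' hjj
      have hxnn : (0:ℝ) ≤ x j ^ 2 * x j' ^ 2 := by positivity
      have hle : x j ^ 2 * x j' ^ 2 * ∫ ω, δ i j ω * δ i j' ω ∂μ ≤ C j j' := by
        rw [hC]
        calc x j ^ 2 * x j' ^ 2 * ∫ ω, δ i j ω * δ i j' ω ∂μ
            ≤ x j ^ 2 * x j' ^ 2 * (((s:ℝ)/m)^2) := mul_le_mul_of_nonneg_left hb hxnn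
          _ = ((s:ℝ)/m)^2 * (x j^2 * x j'^2) := by ring
      rw [if_neg (by simp [hjj]), if_pos rfl]
      linarith
    -- unmatched: expectation is zero
    · have hσzero : ∫ ω, σ i j ω * σ i j' ω * (σ i' k ω * σ i' k' ω) ∂μ = 0 := by
        by_cases hii : i' = i
        · subst hii
          by_cases h1 : k = j
          · subst h1
            have hk'j' : k' ≠ j' := fun h => hm1 ⟨rfl, rfl, h⟩
            have e : (fun ω => σ i' k ω * σ i' j' ω * (σ i' k ω * σ i' k' ω)) =
                fun ω => σ i' j' ω * σ i' k' ω := by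
              funext ω
              have : σ i' k ω * σ i' j' ω * (σ i' k ω * σ i' k' ω) =
                  (σ i' k ω * σ i' k ω) * (σ i' j' ω * σ i' k' ω) := by ring
              rw [this, hσ2, one_mul]
            rw [e]
            exact hσ2zero (i', j') (i', k') (by simp [Ne.symm hk'j'])
          by_cases h2 : k = j'
          · subst h2
            have hk'j : k' ≠ j := fun h => hm2 ⟨rfl, rfl, h⟩
            have e : (fun ω => σ i' j ω * σ i' k ω * (σ i' k ω * σ i' k' ω)) =
                fun ω => σ i' j ω * σ i' k' ω := by
              funext ω
              have : σ i' j ω * σ i' k ω * (σ i' k ω * σ i' k' ω) =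
                  (σ i' k ω * σ i' k ω) * (σ i' j ω * σ i' k' ω) := by ring
              rw [this, hσ2, one_mul]
            rw [e]
            exact hσ2zero (i', j) (i', k') (by simp [Ne.symm hk'j])
          by_cases h3 : k' = j
          · subst h3
            have e : (fun ω => σ i' k' ω * σ i' j' ω * (σ i' k ω * σ i' k' ω)) =
                fun ω => σ i' j' ω * σ i' k ω := by
              funext ω
              have : σ i' k' ω * σ i' j' ω * (σ i' k ω * σ i' k' ω) =
                  (σ i' k' ω * σ i' k' ω) * (σ i' j' ω * σ i' k ω) := by ring
              rw [this, hσ2, one_mul]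
            rw [e]
            exact hσ2zero (i', j') (i', k) (by simp only [ne_eq, Prod.mk.injEq, true_and]; exact fun hh => h2 hh.symm)
          by_cases h4 : k' = j'
          · subst h4
            have e : (fun ω => σ i' j ω * σ i' k' ω * (σ i' k ω * σ i' k' ω)) =
                fun ω => σ i' j ω * σ i' k ω := by
              funext ω
              have : σ i' j ω * σ i' k' ω * (σ i' k ω * σ i' k' ω) =
                  (σ i' k' ω * σ i' k' ω) * (σ i' j ω * σ i' k ω) := by ring
              rw [this, hσ2, one_mul]
            rw [e]
            exact hσ2zero (i', j) (i', k) (by simp only [ne_eq, Prod.mk.injEq, true_and]; exact fun hh => h1 hh.symm)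
          · exact hσ4zero (i', j) (i', j') (i', k) (i', k')
              (by simp [hjj]) (by simp only [ne_eq, Prod.mk.injEq, true_and]; exact fun hh => h1 hh.symm) (by simp only [ne_eq, Prod.mk.injEq, true_and]; exact fun hh => h3 hh.symm)
              (by simp only [ne_eq, Prod.mk.injEq, true_and]; exact fun hh => h2 hh.symm) (by simp only [ne_eq, Prod.mk.injEq, true_and]; exact fun hh => h4 hh.symm) (by simp [hkk])
        · exact hσ4zero (i, j) (i, j') (i', k) (i', k')
            (by simp [hjj]) (by simp [Ne.symm hii]) (by simp [Ne.symm hii])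
            (by simp [Ne.symm hii]) (by simp [Ne.symm hii]) (by simp [hkk])
      have hre : (fun ω => u i j j' ω * u i' k k' ω) =
          fun ω => (x j * x j' * (x k * x k')) *
            ((σ i j ω * σ i j' ω * (σ i' k ω * σ i' k' ω)) *
             (δ i j ω * δ i j' ω * (δ i' k ω * δ i' k' ω))) := by
        funext ω; rw [hue ω]; ring
      rw [hre, MeasureTheory.integral_const_mul]
      have hmul : ∫ ω, (σ i j ω * σ i j' ω * (σ i' k ω * σ i' k' ω)) *
          (δ i j ω * δ i j' ω * (δ i' k ω * δ i' k' ω)) ∂μ = 0 := by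
        rw [hsplit (i,j) (i,j') (i',k) (i',k') (i,j) (i,j') (i',k) (i',k'), hσzero, zero_mul]
      rw [hmul, mul_zero]
      rw [if_neg (by simp; intro h1 h2 h3; exact hm1 ⟨h1, h2, h3⟩),
        if_neg (by simp; intro h1 h2 h3; exact hm2 ⟨h1, h2, h3⟩)]
      norm_num
  have e1 : (fun ω => ((∑ i, (∑ j, δ i j ω * σ i j ω / Real.sqrt s * x j) ^ 2) - 1) ^ 2)
      = fun ω => (1/(s:ℝ))^2 * ∑ q : Fin m × Fin d × Fin d, ∑ q' : Fin m × Fin d × Fin d,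
          u q.1 q.2.1 q.2.2 ω * u q'.1 q'.2.1 q'.2.2 ω := by
    funext ω
    rw [hpt ω, mul_pow]
    congr 1
    have hflat : ∑ i, ∑ j, ∑ j', u i j j' ω
        = ∑ q : Fin m × Fin d × Fin d, u q.1 q.2.1 q.2.2 ω := by
      rw [Fintype.sum_prod_type]
      exact Finset.sum_congr rfl fun i _ => by rw [Fintype.sum_prod_type]
    rw [hflat, sq, Finset.sum_mul_sum]
  rw [e1, MeasureTheory.integral_const_mul]
  rw [integral_finset_sum _ (fun q _ => integrable_finset_sum _
    (fun q' _ => huint q.1 q'.1 q.2.1 q.2.2 q'.2.1 q'.2.2))]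
  have e2 : ∀ q : Fin m × Fin d × Fin d,
      ∫ ω, ∑ q' : Fin m × Fin d × Fin d, u q.1 q.2.1 q.2.2 ω * u q'.1 q'.2.1 q'.2.2 ω ∂μ
      = ∑ q' : Fin m × Fin d × Fin d, ∫ ω, u q.1 q.2.1 q.2.2 ω * u q'.1 q'.2.1 q'.2.2 ω ∂μ :=
    fun q => integral_finset_sum _ (fun q' _ => huint q.1 q'.1 q.2.1 q.2.2 q'.2.1 q'.2.2)
  rw [Finset.sum_congr rfl fun q _ => e2 q]
  have hsum_q' : ∀ q : Fin m × Fin d × Fin d,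
      ∑ q' : Fin m × Fin d × Fin d, ∫ ω, u q.1 q.2.1 q.2.2 ω * u q'.1 q'.2.1 q'.2.2 ω ∂μ
      ≤ 2 * C q.2.1 q.2.2 := by
    rintro ⟨i, j, j'⟩
    calc ∑ q' : Fin m × Fin d × Fin d, ∫ ω, u i j j' ω * u q'.1 q'.2.1 q'.2.2 ω ∂μ
        ≤ ∑ q' : Fin m × Fin d × Fin d,
            ((if q' = (i, j, j') then C j j' else 0) + (if q' = (i, j', j) then C j j' else 0)) := by
          refine Finset.sum_le_sum fun q' _ => ?_
          obtain ⟨i', k, k'⟩ := q'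
          exact hterm i i' j j' k k'
      _ = 2 * C j j' := by
          rw [Finset.sum_add_distrib, Finset.sum_ite_eq' Finset.univ, Finset.sum_ite_eq' Finset.univ]
          simp only [Finset.mem_univ, if_pos]
          ring
  calc (1/(s:ℝ))^2 * ∑ q : Fin m × Fin d × Fin d, ∑ q' : Fin m × Fin d × Fin d,
        ∫ ω, u q.1 q.2.1 q.2.2 ω * u q'.1 q'.2.1 q'.2.2 ω ∂μ
      ≤ (1/(s:ℝ))^2 * ∑ q : Fin m × Fin d × Fin d, 2 * C q.2.1 q.2.2 := by
        refine mul_le_mul_of_nonneg_left (Finset.sum_le_sum fun q _ => hsum_q' q) (by positivity)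
    _ = 2 / (m:ℝ) := by
        have hsum_total : ∑ q : Fin m × Fin d × Fin d, 2 * C q.2.1 q.2.2
            = 2 * ((s:ℝ)/m)^2 * m := by
          rw [Fintype.sum_prod_type]
          have hinner : ∑ p : Fin d × Fin d, 2 * C p.1 p.2 = 2 * ((s:ℝ)/m)^2 := by
            rw [Fintype.sum_prod_type]
            have hrow : ∀ j : Fin d, ∑ j' : Fin d, 2 * C j j' = 2 * ((s:ℝ)/m)^2 * x j ^ 2 := by
              intro j
              simp only [hC]
              calc ∑ j' : Fin d, 2 * (((s:ℝ)/m)^2 * (x j^2 * x j'^2))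
                  = (2 * ((s:ℝ)/m)^2 * x j^2) * ∑ j' : Fin d, x j'^2 := by
                    rw [Finset.mul_sum]; exact Finset.sum_congr rfl fun j' _ => by ring
                _ = 2 * ((s:ℝ)/m)^2 * x j ^2 := by rw [hx]; ring
            rw [Finset.sum_congr rfl fun j _ => hrow j]
            calc ∑ j : Fin d, 2 * ((s:ℝ)/m)^2 * x j^2
                = 2*((s:ℝ)/m)^2 * ∑ j, x j^2 := by
                  rw [Finset.mul_sum]
              _ = 2*((s:ℝ)/m)^2 := by rw [hx]; ring
          rw [Finset.sum_congr rfl fun (i : Fin m) _ => hinner, Finset.sum_const]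
          simp [Finset.card_univ, nsmul_eq_mul]
          ring
        rw [hsum_total]
        field_simp
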